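/- arXiv:1908.04665 — 4 statements merged into one kernel-verified Lean document; each statement's English description precedes it below -/
import Mathlib

section
/- With the same setup, if instead the difference sequence Γ_n = γ_{n+1}−γ_n is monotone decreasing, then for each k, ‖F(e^{i·})/(e^{i·}−α_k)‖_{Y_γ}^2 ≤ ‖H_{α_k}‖_{Y_γ}^2 ≤ ‖G(e^{i·})/(1−ᾱ_k e^{i·})‖_{Y_γ}^2. -/
set_option maxHeartbeats 1000000

open Finset Filter

/-- `Y_γ` semi-norm squared, valued in `ℝ≥0∞` (the weights `γ_{n+1}-γ_n` are nonnegative). -/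
noncomputable def ynorm2e (γ : ℕ → ℝ) (a : ℕ → ℂ) : ENNReal :=
  ∑' n, ENNReal.ofReal ((γ (n + 1) - γ n) * ‖a n‖ ^ 2)

def IsCoeffs (a : ℕ → ℂ) (F : ℂ → ℂ) : Prop :=
  ∀ z : ℂ, ‖z‖ < 1 → HasSum (fun n => a n * z ^ n) (F z)

namespace Stmt9Aux



noncomputable def bl (α z : ℂ) : ℂ := (z - α) / (1 - (starRingEnd ℂ) α * z)

lemma denom_ne {α z : ℂ} (hα : ‖α‖ < 1) (hz : ‖z‖ < 1) :
    (1 : ℂ) - (starRingEnd ℂ) α * z ≠ 0 := by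
  intro h
  have h2 : (starRingEnd ℂ) α * z = 1 := by linear_combination -h
  have h1 : ‖(starRingEnd ℂ) α * z‖ < 1 := by
    rw [norm_mul, RCLike.norm_conj]
    nlinarith [norm_nonneg α, norm_nonneg z]
  rw [h2] at h1; simp at h1

lemma norm_bl_le_one {α z : ℂ} (hα : ‖α‖ < 1) (hz : ‖z‖ < 1) : ‖bl α z‖ ≤ 1 := by
  rw [bl, norm_div]
  apply div_le_one_of_le₀ _ (norm_nonneg _)
  have hα2 : Complex.normSq α < 1 := by
    rw [Complex.normSq_eq_norm_sq]; nlinarith [norm_nonneg α]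
  have hz2 : Complex.normSq z < 1 := by
    rw [Complex.normSq_eq_norm_sq]; nlinarith [norm_nonneg z]
  have key : Complex.normSq (z - α) ≤ Complex.normSq (1 - (starRingEnd ℂ) α * z) := by
    simp only [Complex.normSq_apply, Complex.sub_re, Complex.sub_im, Complex.mul_re,
      Complex.mul_im, Complex.one_re, Complex.one_im, Complex.conj_re, Complex.conj_im] at *
    nlinarith [hα2, hz2]
  rw [Complex.norm_def, Complex.norm_def]
  exact Real.sqrt_le_sqrt key

lemma exists_bound_of_hasSum {c : ℕ → ℂ} {s : ℂ} {z0 : ℂ}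
    (h : HasSum (fun n => c n * z0 ^ n) s) :
    ∃ C : ℝ, 0 ≤ C ∧ ∀ n, ‖c n‖ * ‖z0‖ ^ n ≤ C := by
  have h0 : Tendsto (fun n => ‖c n * z0 ^ n‖) atTop (nhds 0) := by
    simpa using h.summable.tendsto_atTop_zero.norm
  obtain ⟨C, hC⟩ := h0.bddAbove_range
  refine ⟨max C 0, le_max_right _ _, fun n => ?_⟩
  have h1 : ‖c n * z0 ^ n‖ ≤ C := hC (Set.mem_range_self n)
  rw [norm_mul, norm_pow] at h1
  exact h1.trans (le_max_left _ _)

lemma summable_norm_of_bound {c : ℕ → ℂ} {C ρ : ℝ} (hρ : 0 < ρ)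
    (hC : ∀ n, ‖c n‖ * ρ ^ n ≤ C) {z : ℂ} (hz : ‖z‖ < ρ) :
    Summable fun n => ‖c n * z ^ n‖ := by
  have hq0 : 0 ≤ ‖z‖ / ρ := by positivity
  have hq1 : ‖z‖ / ρ < 1 := (div_lt_one hρ).mpr hz
  apply Summable.of_nonneg_of_le (fun n => norm_nonneg _) (fun n => ?_)
    ((summable_geometric_of_lt_one hq0 hq1).mul_left C)
  have hkey : ‖c n‖ * ‖z‖ ^ n = (‖c n‖ * ρ ^ n) * ((‖z‖ / ρ) ^ n) := by
    rw [div_pow]; field_simp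
  rw [norm_mul, norm_pow, hkey]
  exact mul_le_mul_of_nonneg_right (hC n) (by positivity)

/-- norm-summability of a power series on the disk, given pointwise `HasSum` on the disk. -/
lemma summable_norm_disk {c : ℕ → ℂ} {f : ℂ → ℂ}
    (hc : ∀ z : ℂ, ‖z‖ < 1 → HasSum (fun n => c n * z ^ n) (f z))
    {z : ℂ} (hz : ‖z‖ < 1) : Summable fun n => ‖c n * z ^ n‖ := by
  set ρ : ℝ := (‖z‖ + 1) / 2 with hρdef
  have hρ0 : 0 < ρ := by positivity
  have hρ1 : ρ < 1 := by rw [hρdef]; linarith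
  have hzρ : ‖z‖ < ρ := by rw [hρdef]; linarith [norm_nonneg z]
  have hρz : ‖((ρ : ℝ) : ℂ)‖ < 1 := by rw [Complex.norm_real, Real.norm_eq_abs, abs_of_nonneg hρ0.le]; exact hρ1
  obtain ⟨C, _, hC⟩ := exists_bound_of_hasSum (hc _ hρz)
  have hC' : ∀ n, ‖c n‖ * ρ ^ n ≤ C := by
    intro n
    have := hC n
    rwa [Complex.norm_real, Real.norm_eq_abs, abs_of_nonneg hρ0.le] at this
  exact summable_norm_of_bound hρ0 hC' hzρ




noncomputable def tAux (α : ℂ) (c : ℕ → ℂ) : ℕ → ℂ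
  | 0 => 0
  | n + 1 => c n + (starRingEnd ℂ) α * tAux α c n

noncomputable def stepCoeff (α : ℂ) (c : ℕ → ℂ) (n : ℕ) : ℂ :=
  -α * c n + (1 - (Complex.normSq α : ℂ)) * tAux α c n

lemma psi (α : ℂ) (c : ℕ → ℂ) (n : ℕ) :
    ∑ i ∈ range n, Complex.normSq (c i)
      = ∑ i ∈ range n, Complex.normSq (stepCoeff α c i)
        + (1 - Complex.normSq α) * Complex.normSq (tAux α c n) := by
  induction n with
  | zero => simp [tAux]
  | succ n ih =>
    rw [sum_range_succ, sum_range_succ, ih]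
    have key : Complex.normSq (c n) + (1 - Complex.normSq α) * Complex.normSq (tAux α c n)
        = Complex.normSq (stepCoeff α c n)
          + (1 - Complex.normSq α) * Complex.normSq (tAux α c (n + 1)) := by
      simp only [stepCoeff, tAux, Complex.normSq_apply, Complex.add_re, Complex.add_im,
        Complex.mul_re, Complex.mul_im, Complex.sub_re, Complex.sub_im, Complex.neg_re,
        Complex.neg_im, Complex.conj_re, Complex.conj_im, Complex.ofReal_re, Complex.ofReal_im,
        Complex.one_re, Complex.one_im]
      ring
    linarith [key]

noncomputable def blC (α : ℂ) : ℕ → ℂ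
  | 0 => -α
  | i + 1 => (1 - (Complex.normSq α : ℂ)) * ((starRingEnd ℂ) α) ^ i

lemma tAux_eq (α : ℂ) (c : ℕ → ℂ) (n : ℕ) :
    tAux α c n = ∑ i ∈ range n, ((starRingEnd ℂ) α) ^ i * c (n - 1 - i) := by
  induction n with
  | zero => simp [tAux]
  | succ n ih =>
    rw [tAux, ih, Finset.sum_range_succ']
    have h1 : ∀ i ∈ range n, (starRingEnd ℂ) α ^ (i + 1) * c (n + 1 - 1 - (i + 1))
        = (starRingEnd ℂ) α * ((starRingEnd ℂ) α ^ i * c (n - 1 - i)) := by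
      intro i _
      have h2 : n + 1 - 1 - (i + 1) = n - 1 - i := by omega
      rw [h2]; ring
    rw [Finset.sum_congr rfl h1, ← Finset.mul_sum]
    simp only [pow_zero, one_mul, Nat.add_sub_cancel, Nat.sub_zero]
    ring

lemma conv_eq (α : ℂ) (c : ℕ → ℂ) (n : ℕ) :
    ∑ i ∈ range (n + 1), blC α i * c (n - i) = stepCoeff α c n := by
  rw [Finset.sum_range_succ']
  simp only [blC, Nat.sub_zero]
  rw [stepCoeff, tAux_eq]
  rw [Finset.mul_sum]
  have h1 : ∀ i ∈ range n, (1 - (Complex.normSq α : ℂ)) * (starRingEnd ℂ) α ^ i * c (n - (i + 1))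
      = (1 - (Complex.normSq α : ℂ)) * ((starRingEnd ℂ) α ^ i * c (n - 1 - i)) := by
    intro i _
    have h2 : n - (i + 1) = n - 1 - i := by omega
    rw [h2]; ring
  rw [Finset.sum_congr rfl h1]
  ring

lemma blC_norm_le {α : ℂ} (hα : ‖α‖ < 1) (n : ℕ) : ‖blC α n‖ ≤ 1 := by
  have h2 : Complex.normSq α < 1 := by
    rw [Complex.normSq_eq_norm_sq]; nlinarith [norm_nonneg α]
  have h0 : 0 ≤ Complex.normSq α := Complex.normSq_nonneg α
  cases n with
  | zero => simpa [blC] using hα.le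
  | succ i =>
    rw [blC, norm_mul, norm_pow, RCLike.norm_conj]
    have ha1 : ‖α‖ ^ i ≤ 1 := pow_le_one₀ (norm_nonneg α) hα.le
    have : ‖(1 : ℂ) - (Complex.normSq α : ℂ)‖ = 1 - Complex.normSq α := by
      rw [← Complex.ofReal_one, ← Complex.ofReal_sub, Complex.norm_real, Real.norm_eq_abs,
        abs_of_nonneg (by linarith)]
    rw [this]
    nlinarith [norm_nonneg α, pow_nonneg (norm_nonneg α) i]

lemma blC_hasSum {α : ℂ} (hα : ‖α‖ < 1) {z : ℂ} (hz : ‖z‖ < 1) :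
    HasSum (fun n => blC α n * z ^ n) (bl α z) := by
  have hnorm : ‖(starRingEnd ℂ) α * z‖ < 1 := by
    rw [norm_mul, RCLike.norm_conj]
    nlinarith [norm_nonneg α, norm_nonneg z]
  have hg : HasSum (fun n => ((starRingEnd ℂ) α * z) ^ n) (1 - (starRingEnd ℂ) α * z)⁻¹ :=
    hasSum_geometric_of_norm_lt_one hnorm
  have h1 : HasSum (fun n => -α * ((starRingEnd ℂ) α * z) ^ n)
      (-α * (1 - (starRingEnd ℂ) α * z)⁻¹) := hg.mul_left _
  have h2 : HasSum (fun n => z * ((starRingEnd ℂ) α * z) ^ n)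
      (z * (1 - (starRingEnd ℂ) α * z)⁻¹) := hg.mul_left _
  set f : ℕ → ℂ := fun n => if n = 0 then 0 else z * ((starRingEnd ℂ) α * z) ^ (n - 1) with hf
  have hshift : (fun n => f (n + 1)) = fun n => z * ((starRingEnd ℂ) α * z) ^ n := by
    funext n; simp [hf]
  have h2' : HasSum f (z * (1 - (starRingEnd ℂ) α * z)⁻¹) := by
    have := (hasSum_nat_add_iff (f := f) 1).mp (by rw [hshift]; exact h2)
    simpa [hf] using this
  have h3 := h2'.add h1
  have heq : (fun n => f n + -α * ((starRingEnd ℂ) α * z) ^ n)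
      = fun n => blC α n * z ^ n := by
    funext n
    cases n with
    | zero => simp [hf, blC]
    | succ i =>
      simp only [hf, if_neg (Nat.succ_ne_zero i), Nat.add_sub_cancel, blC]
      have hcc : α * (starRingEnd ℂ) α = (Complex.normSq α : ℂ) := Complex.mul_conj α
      rw [mul_pow, mul_pow]
      ring_nf
      linear_combination (-((starRingEnd ℂ) α ^ i * z ^ (i + 1))) * hcc
  rw [heq] at h3
  have hval : z * (1 - (starRingEnd ℂ) α * z)⁻¹ + -α * (1 - (starRingEnd ℂ) α * z)⁻¹
      = bl α z := by
    rw [bl, div_eq_mul_inv]; ring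
  rwa [hval] at h3


lemma step1 {α : ℂ} (hα : ‖α‖ < 1) (c : ℕ → ℂ) (Hf : ℂ → ℂ)
    (hc : ∀ z : ℂ, ‖z‖ < 1 → HasSum (fun n => c n * z ^ n) (Hf z)) :
    (∀ z : ℂ, ‖z‖ < 1 → HasSum (fun n => stepCoeff α c n * z ^ n) (bl α z * Hf z)) ∧
      ∀ n, ∑ i ∈ range n, ‖stepCoeff α c i‖ ^ 2 ≤ ∑ i ∈ range n, ‖c i‖ ^ 2 := by
  constructor
  · intro z hz
    have Sb : Summable fun n => ‖blC α n * z ^ n‖ := by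
      apply summable_norm_of_bound (ρ := 1) one_pos (C := 1) (fun n => ?_) (by simpa using hz)
      simpa using blC_norm_le hα n
    have Sc : Summable fun n => ‖c n * z ^ n‖ := summable_norm_disk hc hz
    have h := hasSum_sum_range_mul_of_summable_norm Sb Sc
    rw [(blC_hasSum hα hz).tsum_eq, (hc z hz).tsum_eq] at h
    have heq : (fun n => ∑ k ∈ range (n + 1), blC α k * z ^ k * (c (n - k) * z ^ (n - k)))
        = fun n => stepCoeff α c n * z ^ n := by
      funext n
      rw [← conv_eq α c n, Finset.sum_mul]
      apply Finset.sum_congr rfl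
      intro k hk
      have hkn : k ≤ n := Nat.lt_succ_iff.mp (Finset.mem_range.mp hk)
      have : z ^ k * z ^ (n - k) = z ^ n := by
        rw [← pow_add]; congr 1; omega
      calc blC α k * z ^ k * (c (n - k) * z ^ (n - k))
          = blC α k * c (n - k) * (z ^ k * z ^ (n - k)) := by ring
        _ = blC α k * c (n - k) * z ^ n := by rw [this]
    rwa [heq] at h
  · intro n
    have h2 : Complex.normSq α < 1 := by
      rw [Complex.normSq_eq_norm_sq]; nlinarith [norm_nonneg α]
    have hψ := psi α c n
    have hns : ∀ x : ℂ, ‖x‖ ^ 2 = Complex.normSq x := by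
      intro x; rw [Complex.sq_norm]
    simp only [hns]
    nlinarith [Complex.normSq_nonneg (tAux α c n)]

lemma chain (s : Finset ℕ) (α : ℕ → ℂ) (hαs : ∀ j ∈ s, ‖α j‖ < 1)
    (c : ℕ → ℂ) (Hf : ℂ → ℂ)
    (hc : ∀ z : ℂ, ‖z‖ < 1 → HasSum (fun n => c n * z ^ n) (Hf z)) :
    ∃ a : ℕ → ℂ,
      (∀ z : ℂ, ‖z‖ < 1 → HasSum (fun n => a n * z ^ n) ((∏ j ∈ s, bl (α j) z) * Hf z)) ∧
      ∀ n, ∑ i ∈ range n, ‖a i‖ ^ 2 ≤ ∑ i ∈ range n, ‖c i‖ ^ 2 := by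
  classical
  induction s using Finset.induction_on generalizing c Hf with
  | empty => exact ⟨c, fun z hz => by simpa using hc z hz, fun n => le_rfl⟩
  | @insert j s' hj ih =>
    obtain ⟨a, haS, haP⟩ := ih (fun i hi => hαs i (Finset.mem_insert_of_mem hi)) c Hf hc
    have hαj : ‖α j‖ < 1 := hαs j (Finset.mem_insert_self j s')
    obtain ⟨h1, h2⟩ := step1 hαj a (fun z => (∏ i ∈ s', bl (α i) z) * Hf z) haS
    refine ⟨stepCoeff (α j) a, fun z hz => ?_, fun n => (h2 n).trans (haP n)⟩
    have := h1 z hz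
    rwa [Finset.prod_insert hj, mul_assoc]



lemma ynorm_mono (γ : ℕ → ℝ) (hmono : Monotone γ)
    (hconc : ∀ n, γ (n + 2) - γ (n + 1) ≤ γ (n + 1) - γ n)
    (a c : ℕ → ℂ)
    (h : ∀ n, ∑ i ∈ range n, ‖a i‖ ^ 2 ≤ ∑ i ∈ range n, ‖c i‖ ^ 2) :
    ynorm2e γ a ≤ ynorm2e γ c := by
  set Γ : ℕ → ℝ := fun n => γ (n + 1) - γ n with hΓ
  have hΓ0 : ∀ n, 0 ≤ Γ n := fun n => sub_nonneg.mpr (hmono (Nat.le_succ n))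
  have hanti : Antitone Γ := antitone_nat_of_succ_le fun n => hconc n
  set L : ℝ := ⨅ n, Γ n with hL
  have hbdd : BddBelow (Set.range Γ) := ⟨0, by rintro x ⟨n, rfl⟩; exact hΓ0 n⟩
  have hL0 : 0 ≤ L := le_ciInf fun n => hΓ0 n
  have hLle : ∀ n, L ≤ Γ n := fun n => ciInf_le hbdd n
  have htend : Tendsto Γ atTop (nhds L) := tendsto_atTop_ciInf hanti hbdd
  set d : ℕ → ENNReal := fun t => ENNReal.ofReal (Γ t - Γ (t + 1)) with hd
  -- tail formula
  have htail : ∀ n, (∑' t, if n ≤ t then d t else 0) = ENNReal.ofReal (Γ n - L) := by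
    intro n
    have hinj : Function.Injective fun t : ℕ => t + n := add_left_injective n
    have hsupp : Function.support (fun t => if n ≤ t then d t else 0)
        ⊆ Set.range fun t : ℕ => t + n := by
      intro t ht
      by_cases hnt : n ≤ t
      · exact ⟨t - n, show t - n + n = t by omega⟩
      · simp [if_neg hnt] at ht
    rw [← Function.Injective.tsum_eq hinj hsupp]
    have heq1 : (fun t : ℕ => if n ≤ t + n then d (t + n) else 0)
        = fun t : ℕ => ENNReal.ofReal (Γ (t + n) - Γ (t + n + 1)) := by
      funext t; rw [if_pos (by omega)]
    rw [heq1]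
    -- real computation
    have hδ0 : ∀ t : ℕ, 0 ≤ Γ (t + n) - Γ (t + n + 1) := fun t => sub_nonneg.mpr (hanti (by omega))
    have hpart : ∀ N, ∑ t ∈ range N, (Γ (t + n) - Γ (t + n + 1)) = Γ n - Γ (N + n) := by
      intro N
      have h1 : ∀ t ∈ range N, Γ (t + n) - Γ (t + n + 1)
          = (fun i => Γ (i + n)) t - (fun i => Γ (i + n)) (t + 1) := by
        intro t _
        have h2 : t + n + 1 = t + 1 + n := by omega
        simp only [h2]
      rw [Finset.sum_congr rfl h1, Finset.sum_range_sub' (fun i => Γ (i + n)) N]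
      simp [Nat.add_comm]
    have hsum : Summable fun t => Γ (t + n) - Γ (t + n + 1) := by
      apply summable_of_sum_range_le hδ0 (c := Γ n - L)
      intro N
      rw [hpart N]
      have := hLle (N + n)
      linarith
    have hhs : HasSum (fun t => Γ (t + n) - Γ (t + n + 1)) (Γ n - L) := by
      rw [hasSum_iff_tendsto_nat_of_nonneg hδ0]
      have h1 : Tendsto (fun N : ℕ => Γ n - Γ (N + n)) atTop (nhds (Γ n - L)) := by
        exact (tendsto_const_nhds.sub (htend.comp (tendsto_add_atTop_nat n)))
      exact h1.congr fun N => (hpart N).symm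
    rw [← hhs.tsum_eq, ← ENNReal.ofReal_tsum_of_nonneg hδ0 hsum]
  -- decomposition of the norm
  have decomp : ∀ b : ℕ → ℂ, ynorm2e γ b
      = ENNReal.ofReal L * (∑' n, ENNReal.ofReal (‖b n‖ ^ 2))
        + ∑' t, d t * ∑ i ∈ range (t + 1), ENNReal.ofReal (‖b i‖ ^ 2) := by
    intro b
    set A : ℕ → ENNReal := fun n => ENNReal.ofReal (‖b n‖ ^ 2) with hA
    have h1 : ∀ n, ENNReal.ofReal (Γ n * ‖b n‖ ^ 2) = ENNReal.ofReal (Γ n) * A n :=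
      fun n => ENNReal.ofReal_mul (hΓ0 n)
    have h2 : ∀ n, ENNReal.ofReal (Γ n) = ENNReal.ofReal L + ENNReal.ofReal (Γ n - L) := by
      intro n
      rw [← ENNReal.ofReal_add hL0 (sub_nonneg.mpr (hLle n))]
      congr 1; ring
    calc ynorm2e γ b = ∑' n, ENNReal.ofReal (Γ n) * A n := by
          unfold ynorm2e; exact tsum_congr h1
      _ = ∑' n, (ENNReal.ofReal L * A n + ENNReal.ofReal (Γ n - L) * A n) := by
          apply tsum_congr; intro n; rw [h2 n, add_mul]
      _ = (∑' n, ENNReal.ofReal L * A n) + ∑' n, ENNReal.ofReal (Γ n - L) * A n :=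
          ENNReal.tsum_add
      _ = ENNReal.ofReal L * (∑' n, A n) + ∑' n, ENNReal.ofReal (Γ n - L) * A n := by
          rw [ENNReal.tsum_mul_left]
      _ = ENNReal.ofReal L * (∑' n, A n) + ∑' t, d t * ∑ i ∈ range (t + 1), A i := by
          congr 1
          calc ∑' n, ENNReal.ofReal (Γ n - L) * A n
              = ∑' n, (∑' t, if n ≤ t then d t else 0) * A n := by
                apply tsum_congr; intro n; rw [htail n]
            _ = ∑' n, ∑' t, (if n ≤ t then d t else 0) * A n := by
                apply tsum_congr; intro n; rw [ENNReal.tsum_mul_right]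
            _ = ∑' t, ∑' n, (if n ≤ t then d t else 0) * A n := ENNReal.tsum_comm
            _ = ∑' t, d t * ∑ i ∈ range (t + 1), A i := by
                apply tsum_congr; intro t
                have hsupp2 : ∀ n ∉ range (t + 1), (if n ≤ t then d t else 0) * A n = 0 := by
                  intro n hn
                  rw [if_neg (by simp at hn; omega), zero_mul]
                rw [tsum_eq_sum hsupp2, Finset.mul_sum]
                apply Finset.sum_congr rfl
                intro i hi
                rw [if_pos (by simp at hi; omega)]
  rw [decomp a, decomp c]
  have hsums : ∀ N, ∑ i ∈ range N, ENNReal.ofReal (‖a i‖ ^ 2)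
      ≤ ∑ i ∈ range N, ENNReal.ofReal (‖c i‖ ^ 2) := by
    intro N
    rw [← ENNReal.ofReal_sum_of_nonneg (fun i _ => by positivity),
      ← ENNReal.ofReal_sum_of_nonneg (fun i _ => by positivity)]
    exact ENNReal.ofReal_le_ofReal (h N)
  apply add_le_add
  · apply mul_le_mul_right
    rw [ENNReal.tsum_eq_iSup_nat, ENNReal.tsum_eq_iSup_nat]
    exact iSup_mono fun N => hsums N
  · exact ENNReal.tsum_le_tsum fun t => mul_le_mul_right (hsums (t + 1)) _



lemma limcoeff0 {r : ℝ} (hr : 0 < r) (S : Finset ℂ) {B : ℕ → ℝ}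
    (hB : Summable fun m => B m * r ^ m)
    {a : ℕ → ℕ → ℂ} {v : ℕ → ℂ}
    (ha : ∀ K m, ‖a K m‖ ≤ B m) (hv : ∀ m, ‖v m‖ ≤ B m)
    (hconv : ∀ z : ℂ, 0 < ‖z‖ → ‖z‖ < r → z ∉ S →
      Tendsto (fun K => ∑' m, a K m * z ^ m) atTop (nhds (∑' m, v m * z ^ m))) :
    Tendsto (fun K => a K 0) atTop (nhds (v 0)) := by
  have hB0 : ∀ m, 0 ≤ B m := fun m => le_trans (norm_nonneg _) (ha 0 m)
  set r2 : ℝ := r / 2 with hr2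
  have hr20 : 0 < r2 := by positivity
  have hr2r : r2 < r := by rw [hr2]; linarith
  -- summability of shifted envelope at radius r2
  have hBs : Summable fun m => B (m + 1) * r ^ (m + 1) := (summable_nat_add_iff 1).2 hB
  have hBshift : Summable fun m => B (m + 1) * r2 ^ m := by
    apply Summable.of_nonneg_of_le (fun m => mul_nonneg (hB0 _) (by positivity)) (fun m => ?_) (hBs.mul_left (1 / r))
    have h1 : B (m + 1) * r2 ^ m ≤ B (m + 1) * r ^ m := by
      apply mul_le_mul_of_nonneg_left _ (hB0 _)
      exact pow_le_pow_left₀ hr20.le hr2r.le m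
    have h2 : 1 / r * (B (m + 1) * r ^ (m + 1)) = B (m + 1) * r ^ m := by
      rw [pow_succ]; field_simp
    rw [h2]; exact h1
  set E : ℝ := ∑' m, B (m + 1) * r2 ^ m with hE
  have hE0 : 0 ≤ E := tsum_nonneg fun m => mul_nonneg (hB0 _) (by positivity)
  -- summability of the series themselves
  have hsummA : ∀ (b : ℕ → ℂ), (∀ m, ‖b m‖ ≤ B m) → ∀ z : ℂ, ‖z‖ ≤ r →
      Summable fun m => b m * z ^ m := by
    intro b hb z hz
    apply Summable.of_norm
    apply Summable.of_nonneg_of_le (fun m => norm_nonneg _) (fun m => ?_) hB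
    rw [norm_mul, norm_pow]
    exact mul_le_mul (hb m) (pow_le_pow_left₀ (norm_nonneg z) hz m) (by positivity) (hB0 m)
  -- tail bound
  have htail : ∀ (b : ℕ → ℂ), (∀ m, ‖b m‖ ≤ B m) → ∀ z : ℂ, ‖z‖ ≤ r2 →
      ‖∑' m, b (m + 1) * z ^ m‖ ≤ E := by
    intro b hb z hz
    have hs : Summable fun m => ‖b (m + 1) * z ^ m‖ := by
      apply Summable.of_nonneg_of_le (fun m => norm_nonneg _) (fun m => ?_) hBshift
      rw [norm_mul, norm_pow]
      exact mul_le_mul (hb _) (pow_le_pow_left₀ (norm_nonneg z) hz m) (by positivity) (hB0 _)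
    refine (norm_tsum_le_tsum_norm hs).trans ?_
    apply Summable.tsum_le_tsum _ hs hBshift
    intro m
    rw [norm_mul, norm_pow]
    exact mul_le_mul (hb _) (pow_le_pow_left₀ (norm_nonneg z) hz m) (by positivity) (hB0 _)
  -- decomposition
  have hdec : ∀ (b : ℕ → ℂ), (∀ m, ‖b m‖ ≤ B m) → ∀ z : ℂ, ‖z‖ ≤ r2 →
      ∑' m, b m * z ^ m = b 0 + z * ∑' m, b (m + 1) * z ^ m := by
    intro b hb z hz
    rw [Summable.tsum_eq_zero_add (hsummA b hb z (le_trans hz hr2r.le))]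
    simp only [pow_zero, mul_one]
    congr 1
    rw [← tsum_mul_left]
    apply tsum_congr; intro m; rw [pow_succ]; ring
  rw [Metric.tendsto_atTop]
  intro ε hε
  set cbound : ℝ := min r2 (ε / (4 * (E + 1))) with hcb
  have hcb0 : 0 < cbound := lt_min hr20 (by positivity)
  obtain ⟨x, hx⟩ := ((Set.Ioo_infinite hcb0).diff
    (S.image Complex.re).finite_toSet).nonempty
  obtain ⟨⟨hx0, hxc⟩, hxbad⟩ := hx
  set z : ℂ := (x : ℂ) with hz
  have hznorm : ‖z‖ = x := by rw [hz, Complex.norm_real, Real.norm_eq_abs, abs_of_pos hx0]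
  have hz0 : 0 < ‖z‖ := by rw [hznorm]; exact hx0
  have hzr2 : ‖z‖ ≤ r2 := by rw [hznorm]; exact le_of_lt (lt_of_lt_of_le hxc (min_le_left _ _))
  have hzr : ‖z‖ < r := lt_of_le_of_lt hzr2 hr2r
  have hzS : z ∉ S := by
    intro hmem
    exact hxbad (Finset.mem_coe.mpr (Finset.mem_image.mpr ⟨z, hmem, Complex.ofReal_re x⟩))
  obtain ⟨N, hN⟩ := (Metric.tendsto_atTop.mp (hconv z hz0 hzr hzS)) (ε / 2) (by positivity)
  refine ⟨N, fun K hK => ?_⟩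
  have hdist := hN K hK
  rw [dist_eq_norm] at hdist ⊢
  have hKdec := hdec (a K) (ha K) z hzr2
  have hvdec := hdec v hv z hzr2
  have hid : a K 0 - v 0 = ((∑' m, a K m * z ^ m) - ∑' m, v m * z ^ m)
      - z * ((∑' m, a K (m + 1) * z ^ m) - ∑' m, v (m + 1) * z ^ m) := by
    rw [hKdec, hvdec]; ring
  rw [hid]
  have h1 : ‖z * ((∑' m, a K (m + 1) * z ^ m) - ∑' m, v (m + 1) * z ^ m)‖ ≤ x * (2 * E) := by
    rw [norm_mul, hznorm]
    apply mul_le_mul_of_nonneg_left _ hx0.le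
    refine (norm_sub_le _ _).trans ?_
    have := htail (a K) (ha K) z hzr2
    have := htail v hv z hzr2
    linarith
  have hxε : x * (2 * E) < ε / 2 := by
    have hxle : x ≤ ε / (4 * (E + 1)) := le_of_lt (lt_of_lt_of_le hxc (min_le_right _ _))
    have h2 : x * (2 * E) ≤ ε / (4 * (E + 1)) * (2 * E) :=
      mul_le_mul_of_nonneg_right hxle (by positivity)
    have h3 : ε / (4 * (E + 1)) * (2 * E) < ε / 2 := by
      rw [div_mul_eq_mul_div, div_lt_div_iff₀ (by positivity) (by positivity)]
      nlinarith
    linarith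
  calc ‖((∑' m, a K m * z ^ m) - ∑' m, v m * z ^ m)
      - z * ((∑' m, a K (m + 1) * z ^ m) - ∑' m, v (m + 1) * z ^ m)‖
      ≤ ‖(∑' m, a K m * z ^ m) - ∑' m, v m * z ^ m‖
        + ‖z * ((∑' m, a K (m + 1) * z ^ m) - ∑' m, v (m + 1) * z ^ m)‖ := norm_sub_le _ _
    _ < ε / 2 + ε / 2 := by
        apply add_lt_add_of_lt_of_le hdist (le_trans h1 hxε.le)
    _ = ε := by ring

lemma limcoeff {r : ℝ} (hr : 0 < r) (S : Finset ℂ) {B : ℕ → ℝ}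
    (hB : Summable fun m => B m * r ^ m)
    {a : ℕ → ℕ → ℂ} {v : ℕ → ℂ}
    (ha : ∀ K m, ‖a K m‖ ≤ B m) (hv : ∀ m, ‖v m‖ ≤ B m)
    (hconv : ∀ z : ℂ, 0 < ‖z‖ → ‖z‖ < r → z ∉ S →
      Tendsto (fun K => ∑' m, a K m * z ^ m) atTop (nhds (∑' m, v m * z ^ m))) :
    ∀ n, Tendsto (fun K => a K n) atTop (nhds (v n)) := by
  intro n
  induction n generalizing a v B with
  | zero => exact limcoeff0 hr S hB ha hv hconv
  | succ n ih =>
    have hB0 : ∀ m, 0 ≤ B m := fun m => le_trans (norm_nonneg _) (ha 0 m)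
    have h0 : Tendsto (fun K => a K 0) atTop (nhds (v 0)) := limcoeff0 hr S hB ha hv hconv
    have hBs : Summable fun m => B (m + 1) * r ^ (m + 1) := (summable_nat_add_iff 1).2 hB
    have hB' : Summable fun m => B (m + 1) * r ^ m := by
      apply Summable.congr (hBs.mul_left (1 / r))
      intro m
      rw [pow_succ]; field_simp
    have hsumm : ∀ (b : ℕ → ℂ), (∀ m, ‖b m‖ ≤ B m) → ∀ z : ℂ, ‖z‖ < r →
        Summable fun m => b m * z ^ m := by
      intro b hb z hz
      apply Summable.of_norm
      apply Summable.of_nonneg_of_le (fun m => norm_nonneg _) (fun m => ?_) hB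
      rw [norm_mul, norm_pow]
      exact mul_le_mul (hb m) (pow_le_pow_left₀ (norm_nonneg z) hz.le m) (by positivity) (hB0 m)
    have hshift : ∀ (b : ℕ → ℂ), (∀ m, ‖b m‖ ≤ B m) → ∀ z : ℂ, 0 < ‖z‖ → ‖z‖ < r →
        ∑' m, b (m + 1) * z ^ m = z⁻¹ * ((∑' m, b m * z ^ m) - b 0) := by
      intro b hb z hz0 hzr
      have hzne : z ≠ 0 := by intro hzz; rw [hzz] at hz0; simp at hz0
      rw [Summable.tsum_eq_zero_add (hsumm b hb z hzr)]
      simp only [pow_zero, mul_one]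
      have h2 : ∑' m, b (m + 1) * z ^ (m + 1) = z * ∑' m, b (m + 1) * z ^ m := by
        rw [← tsum_mul_left]
        apply tsum_congr; intro m; rw [pow_succ]; ring
      rw [h2]
      field_simp
      ring
    exact ih (B := fun m => B (m + 1)) hB' (a := fun K m => a K (m + 1))
      (v := fun m => v (m + 1)) (fun K m => ha K (m + 1)) (fun m => hv (m + 1))
      (fun z hz0 hzr hzS => by
        simp only [hshift (a _) (ha _) z hz0 hzr, hshift v hv z hz0 hzr]
        exact (((hconv z hz0 hzr hzS).sub h0).const_mul z⁻¹))

lemma exists_good_rho (S : Finset ℂ) :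
    ∃ ρ : ℝ, 1 / 2 < ρ ∧ ρ < 1 ∧ ((ρ : ℝ) : ℂ) ∉ S := by
  obtain ⟨ρ, hmem, hbad⟩ := ((Set.Ioo_infinite (by norm_num : (1 / 2 : ℝ) < 1)).diff
    (S.image Complex.re).finite_toSet).nonempty
  exact ⟨ρ, hmem.1, hmem.2, fun hc =>
    hbad (Finset.mem_coe.mpr (Finset.mem_image.mpr ⟨_, hc, Complex.ofReal_re ρ⟩))⟩


lemma coeff_ext {a c : ℕ → ℂ} {f : ℂ → ℂ} (S : Finset ℂ)
    (hA : ∀ z : ℂ, ‖z‖ < 1 → z ∉ S → HasSum (fun n => a n * z ^ n) (f z))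
    (hC : ∀ z : ℂ, ‖z‖ < 1 → z ∉ S → HasSum (fun n => c n * z ^ n) (f z)) :
    a = c := by
  obtain ⟨ρ, hρh, hρ1, hρS⟩ := exists_good_rho S
  have hρ0 : 0 < ρ := by linarith
  have hρn : ‖((ρ : ℝ) : ℂ)‖ = ρ := by
    rw [Complex.norm_real, Real.norm_eq_abs, abs_of_pos hρ0]
  have hρn1 : ‖((ρ : ℝ) : ℂ)‖ < 1 := by rw [hρn]; exact hρ1
  obtain ⟨Ca, hCa0, hCa⟩ := exists_bound_of_hasSum (hA _ hρn1 hρS)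
  obtain ⟨Cc, hCc0, hCc⟩ := exists_bound_of_hasSum (hC _ hρn1 hρS)
  set B : ℕ → ℝ := fun n => (Ca + Cc) * (ρ⁻¹) ^ n with hB
  have hbound : ∀ (b : ℕ → ℂ) (Cb : ℝ), (∀ n, ‖b n‖ * ρ ^ n ≤ Cb) → Cb ≤ Ca + Cc →
      ∀ n, ‖b n‖ ≤ B n := by
    intro b Cb hCb hle n
    have hρpow : 0 < ρ ^ n := by positivity
    have h1 : ‖b n‖ ≤ Cb / ρ ^ n := (le_div_iff₀ hρpow).mpr (hCb n)
    have h2 : Cb / ρ ^ n ≤ (Ca + Cc) / ρ ^ n := (div_le_div_iff_of_pos_right hρpow).mpr hle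
    have h3 : (Ca + Cc) / ρ ^ n = B n := by
      simp only [hB]
      rw [inv_pow, ← div_eq_mul_inv]
    linarith
  have hab : ∀ n, ‖a n‖ ≤ B n :=
    hbound a Ca (fun n => by have := hCa n; rwa [hρn] at this) (by linarith)
  have hcb : ∀ n, ‖c n‖ ≤ B n :=
    hbound c Cc (fun n => by have := hCc n; rwa [hρn] at this) (by linarith)
  have hBsum : Summable fun m => B m * (1 / 4 : ℝ) ^ m := by
    have hq0 : (0 : ℝ) ≤ ρ⁻¹ / 4 := by positivity
    have hq1 : ρ⁻¹ / 4 < 1 := by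
      have : ρ⁻¹ < 2 := by
        rw [inv_lt_comm₀ (by linarith) (by norm_num)]
        linarith
      linarith
    apply Summable.congr ((summable_geometric_of_lt_one hq0 hq1).mul_left (Ca + Cc))
    intro m
    simp only [hB]
    have hpow : (ρ⁻¹ / 4 : ℝ) ^ m = ρ⁻¹ ^ m * (1 / 4) ^ m := by
      rw [← mul_pow]
      congr 1
      ring
    rw [hpow]
    ring
  have hlim := limcoeff (r := (1 / 4 : ℝ)) (by norm_num) S hBsum
    (a := fun _ => a) (v := c) (fun _ => hab) hcb (fun z hz0 hzr hzS => by
      have hz1 : ‖z‖ < 1 := lt_trans hzr (by norm_num)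
      simp only [(hA z hz1 hzS).tsum_eq, (hC z hz1 hzS).tsum_eq]
      exact tendsto_const_nhds)
  funext n
  exact tendsto_nhds_unique tendsto_const_nhds (hlim n)

end Stmt9Aux

open Stmt9Aux in
/-- Lemma (decreasing differences): with `F ∈ X_γ` having zeros `α_1, α_2, …` (ordered by
increasing modulus, `m` finite or infinite), Blaschke decomposition `F = B·G`, partial
decompositions `F_k` (so `F = (∏_{j=1}^k (z-α_j)/(1-ᾱ_j z))·F_k` and `F_k → G`), and
`H_{α_k} = F_k/(1-ᾱ_k z)`: if `γ_{n+1}-γ_n` is monotone decreasing then for each `k`,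
`‖F/(·-α_k)‖_{Y_γ}² ≤ ‖H_{α_k}‖_{Y_γ}² ≤ ‖G/(1-ᾱ_k·)‖_{Y_γ}²`. -/
theorem stmt9 (γ : ℕ → ℝ) (hmono : Monotone γ) (h0 : γ 0 = 0)
    (hconc : ∀ n, γ (n + 2) - γ (n + 1) ≤ γ (n + 1) - γ n)
    (m : ℕ∞) (α : ℕ → ℂ)
    (hα : ∀ j : ℕ, 1 ≤ j → (j : ℕ∞) ≤ m → ‖α j‖ < 1)
    (hord : ∀ j : ℕ, 1 ≤ j → ((j : ℕ∞) + 1) ≤ m → ‖α j‖ ≤ ‖α (j + 1)‖)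
    (F G : ℂ → ℂ) (Fk : ℕ → ℂ → ℂ) (hFk0 : Fk 0 = F)
    (hfac : ∀ k : ℕ, (k : ℕ∞) ≤ m → ∀ z : ℂ, ‖z‖ < 1 →
      F z = (∏ j ∈ Icc 1 k, (z - α j) / (1 - (starRingEnd ℂ) (α j) * z)) * Fk k z)
    (hG0 : ∀ z : ℂ, ‖z‖ < 1 → G z ≠ 0)
    (hGfin : ∀ mf : ℕ, m = (mf : ℕ∞) → ∀ z : ℂ, ‖z‖ < 1 → Fk mf z = G z)
    (hGinf : m = ⊤ → ∀ z : ℂ, ‖z‖ < 1 →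
      Tendsto (fun k => Fk k z) atTop (nhds (G z)))
    (f : ℕ → ℂ) (hf : IsCoeffs f F)
    (hH2 : Summable fun n => ‖f n‖ ^ 2)
    (hX : Summable fun n => γ n * ‖f n‖ ^ 2)
    (u v w : ℕ → ℕ → ℂ)
    -- `u k` : coefficients of `G(z)/(1-ᾱ_k z)`
    (hu : ∀ k : ℕ, 1 ≤ k → (k : ℕ∞) ≤ m → ∀ z : ℂ, ‖z‖ < 1 →
      HasSum (fun n => u k n * z ^ n) (G z / (1 - (starRingEnd ℂ) (α k) * z)))
    -- `v k` : coefficients of `H_{α_k}(z) = F_k(z)/(1-ᾱ_k z)`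
    (hv : ∀ k : ℕ, 1 ≤ k → (k : ℕ∞) ≤ m → ∀ z : ℂ, ‖z‖ < 1 →
      HasSum (fun n => v k n * z ^ n) (Fk k z / (1 - (starRingEnd ℂ) (α k) * z)))
    -- `w k` : coefficients of `F(z)/(z-α_k)` (singularity removed)
    (hw : ∀ k : ℕ, 1 ≤ k → (k : ℕ∞) ≤ m → ∀ z : ℂ, ‖z‖ < 1 → z ≠ α k →
      HasSum (fun n => w k n * z ^ n) (F z / (z - α k))) :
    ∀ k : ℕ, 1 ≤ k → (k : ℕ∞) ≤ m →
      ynorm2e γ (w k) ≤ ynorm2e γ (v k) ∧ ynorm2e γ (v k) ≤ ynorm2e γ (u k) := by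
  intro k hk1 hkm
  have hαk : ‖α k‖ < 1 := hα k hk1 hkm
  constructor
  · -- `‖F/(z-α_k)‖ ≤ ‖H‖`
    have hαj : ∀ j ∈ Icc 1 (k - 1), ‖α j‖ < 1 := by
      intro j hj
      rw [mem_Icc] at hj
      refine hα j hj.1 (le_trans ?_ hkm)
      exact_mod_cast (by omega : j ≤ k)
    obtain ⟨a, haS, haP⟩ := chain (Icc 1 (k - 1)) α hαj (v k)
      (fun z => Fk k z / (1 - (starRingEnd ℂ) (α k) * z)) (hv k hk1 hkm)
    have hwa : w k = a := by
      apply coeff_ext (S := {α k}) (f := fun z => F z / (z - α k))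
      · intro z hz hzS
        exact hw k hk1 hkm z hz (by simpa using hzS)
      · intro z hz hzS
        have h1 := haS z hz
        have hzk : z - α k ≠ 0 := sub_ne_zero.mpr (by simpa using hzS)
        have hdkz : (1 : ℂ) - (starRingEnd ℂ) (α k) * z ≠ 0 := denom_ne hαk hz
        have heq : (∏ j ∈ Icc 1 (k - 1), bl (α j) z)
            * (Fk k z / (1 - (starRingEnd ℂ) (α k) * z)) = F z / (z - α k) := by
          have hfz : F z = (∏ j ∈ Icc 1 k, bl (α j) z) * Fk k z := hfac k hkm z hz
          have hk' : k - 1 + 1 = k := by omega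
          have hIcc := Finset.prod_Icc_succ_top (a := 1) (b := k - 1) (by omega)
            (fun j => bl (α j) z)
          rw [hk'] at hIcc
          rw [hfz, hIcc, bl]
          field_simp
        rw [← heq]
        exact h1
    rw [hwa]
    exact ynorm_mono γ hmono hconc a (v k) haP
  · -- `‖H‖ ≤ ‖G/(1-ᾱ_k z)‖`
    by_cases htop : m = ⊤
    case neg =>
      obtain ⟨mf, hmf⟩ := WithTop.ne_top_iff_exists.mp htop
      have hkmf : k ≤ mf := by
        rw [← hmf] at hkm
        exact Nat.cast_le.mp hkm
      have hαj2 : ∀ j ∈ Icc (k + 1) mf, ‖α j‖ < 1 := by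
        intro j hj
        rw [mem_Icc] at hj
        refine hα j (by omega) ?_
        rw [← hmf]
        exact Nat.cast_le.mpr hj.2
      obtain ⟨a, haS, haP⟩ := chain (Icc (k + 1) mf) α hαj2 (u k)
        (fun z => G z / (1 - (starRingEnd ℂ) (α k) * z)) (hu k hk1 hkm)
      have hva : v k = a := by
        apply coeff_ext (S := (Icc 1 k).image α)
          (f := fun z => Fk k z / (1 - (starRingEnd ℂ) (α k) * z))
        · intro z hz _
          exact hv k hk1 hkm z hz
        · intro z hz hzS
          have h1 := haS z hz
          have hne : ∀ j ∈ Icc 1 k, z ≠ α j := by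
            intro j hj hzj
            exact hzS (Finset.mem_image.mpr ⟨j, hj, hzj.symm⟩)
          have hPne : (∏ j ∈ Icc 1 k, bl (α j) z) ≠ 0 := by
            apply Finset.prod_ne_zero_iff.mpr
            intro j hj
            have hj' := Finset.mem_Icc.mp hj
            have hαj : ‖α j‖ < 1 :=
              hα j hj'.1 (le_trans (by exact_mod_cast hj'.2) hkm)
            exact div_ne_zero (sub_ne_zero.mpr (hne j hj)) (denom_ne hαj hz)
          have hsplit : (∏ j ∈ Icc 1 k, bl (α j) z) * (∏ j ∈ Icc (k + 1) mf, bl (α j) z)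
              = ∏ j ∈ Icc 1 mf, bl (α j) z := by
            have e1 : Icc 1 k = Ioc 0 k := Finset.Icc_add_one_left_eq_Ioc 0 k
            have e2 : Icc (k + 1) mf = Ioc k mf := Finset.Icc_add_one_left_eq_Ioc k mf
            have e3 : Icc 1 mf = Ioc 0 mf := Finset.Icc_add_one_left_eq_Ioc 0 mf
            rw [e1, e2, e3]
            exact Finset.prod_Ioc_consecutive _ (Nat.zero_le k) hkmf
          have hfk : F z = (∏ j ∈ Icc 1 k, bl (α j) z) * Fk k z := hfac k hkm z hz
          have hfmf : F z = (∏ j ∈ Icc 1 mf, bl (α j) z) * Fk mf z :=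
            hfac mf hmf.le z hz
          have hGf : Fk mf z = G z := hGfin mf hmf.symm z hz
          have hFkQ : Fk k z = (∏ j ∈ Icc (k + 1) mf, bl (α j) z) * G z := by
            apply mul_left_cancel₀ hPne
            rw [← mul_assoc, hsplit, ← hGf]
            exact hfk.symm.trans hfmf
          have heq : (∏ j ∈ Icc (k + 1) mf, bl (α j) z)
              * (G z / (1 - (starRingEnd ℂ) (α k) * z))
              = Fk k z / (1 - (starRingEnd ℂ) (α k) * z) := by
            rw [hFkQ, mul_div_assoc]
          rw [← heq]
          exact h1
      rw [hva]
      exact ynorm_mono γ hmono hconc a (u k) haP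
    case pos =>
      have hαall : ∀ j : ℕ, 1 ≤ j → ‖α j‖ < 1 := fun j hj => hα j hj (htop ▸ le_top)
      have hus := hu k hk1 hkm
      have hvs := hv k hk1 hkm
      have hchain : ∀ K : ℕ, ∃ a : ℕ → ℂ,
          (∀ z : ℂ, ‖z‖ < 1 → HasSum (fun n => a n * z ^ n)
            ((∏ j ∈ Icc (k + 1) K, bl (α j) z) * (G z / (1 - (starRingEnd ℂ) (α k) * z))))
          ∧ ∀ n, ∑ i ∈ range n, ‖a i‖ ^ 2 ≤ ∑ i ∈ range n, ‖u k i‖ ^ 2 :=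
        fun K => chain (Icc (k + 1) K) α
          (fun j hj => hαall j (by have := (Finset.mem_Icc.mp hj).1; omega)) (u k) _ hus
      choose A hAS hAP using hchain
      have hρn1 : ‖(((3 : ℝ) / 4 : ℝ) : ℂ)‖ < 1 := by
        rw [Complex.norm_real, Real.norm_eq_abs, abs_of_nonneg (by norm_num : (0:ℝ) ≤ 3/4)]
        norm_num
      have hnval : ‖(((3 : ℝ) / 4 : ℝ) : ℂ)‖ = (3 / 4 : ℝ) := by
        rw [Complex.norm_real, Real.norm_eq_abs, abs_of_nonneg (by norm_num : (0:ℝ) ≤ 3/4)]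
      obtain ⟨Cu, hCu0, hCu⟩ := exists_bound_of_hasSum (hus _ hρn1)
      obtain ⟨Cv, hCv0, hCv⟩ := exists_bound_of_hasSum (hvs _ hρn1)
      simp only [hnval] at hCu hCv
      have hgen : ∀ (b : ℕ → ℂ) (Cb : ℝ), (∀ n, ‖b n‖ * (3 / 4 : ℝ) ^ n ≤ Cb) →
          ∀ n, ‖b n‖ ≤ Cb * (4 / 3 : ℝ) ^ n := by
        intro b Cb hCb n
        have h2 : (0 : ℝ) < (3 / 4 : ℝ) ^ n := by positivity
        have h1 : ‖b n‖ ≤ Cb / (3 / 4 : ℝ) ^ n := (le_div_iff₀ h2).mpr (hCb n)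
        refine h1.trans (le_of_eq ?_)
        rw [div_eq_mul_inv, ← inv_pow]
        norm_num
      have hu_bound := hgen (u k) Cu hCu
      have hv_bound' := hgen (v k) Cv hCv
      set B : ℕ → ℝ := fun n => ((n : ℝ) + 1) * (Cu + Cv + 1) * ((4 / 3 : ℝ) ^ n) ^ 2
        with hBdef
      have hXn : ∀ n : ℕ, (1 : ℝ) ≤ (4 / 3 : ℝ) ^ n := fun n => one_le_pow₀ (by norm_num)
      have hB0 : ∀ n, 0 ≤ B n := by
        intro n
        simp only [hBdef]
        positivity
      have hA_bound : ∀ K n, ‖A K n‖ ≤ B n := by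
        intro K n
        have h1 : ‖A K n‖ ^ 2 ≤ ∑ i ∈ range (n + 1), ‖A K i‖ ^ 2 :=
          Finset.single_le_sum (f := fun i => ‖A K i‖ ^ 2) (fun i _ => by positivity)
            (Finset.self_mem_range_succ n)
        have h2 := hAP K (n + 1)
        have h3 : ∑ i ∈ range (n + 1), ‖u k i‖ ^ 2
            ≤ ((n : ℝ) + 1) * (Cu * (4 / 3 : ℝ) ^ n) ^ 2 := by
          have hterm : ∀ i ∈ range (n + 1), ‖u k i‖ ^ 2 ≤ (Cu * (4 / 3 : ℝ) ^ n) ^ 2 := by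
            intro i hi
            rw [mem_range] at hi
            have hub := hu_bound i
            have hmono2 : (4 / 3 : ℝ) ^ i ≤ (4 / 3 : ℝ) ^ n :=
              pow_le_pow_right₀ (by norm_num) (by omega)
            have h0u : (0 : ℝ) ≤ ‖u k i‖ := norm_nonneg _
            have hub2 : ‖u k i‖ ≤ Cu * (4 / 3 : ℝ) ^ n :=
              hub.trans (mul_le_mul_of_nonneg_left hmono2 hCu0)
            exact pow_le_pow_left₀ h0u hub2 2
          calc ∑ i ∈ range (n + 1), ‖u k i‖ ^ 2
              ≤ ∑ _i ∈ range (n + 1), (Cu * (4 / 3 : ℝ) ^ n) ^ 2 := Finset.sum_le_sum hterm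
            _ = ((n : ℝ) + 1) * (Cu * (4 / 3 : ℝ) ^ n) ^ 2 := by
                rw [Finset.sum_const, Finset.card_range, nsmul_eq_mul]
                push_cast
                ring
        have h4 : ‖A K n‖ ^ 2 ≤ B n ^ 2 := by
          have hXn' := hXn n
          have hle : ‖A K n‖ ^ 2 ≤ ((n : ℝ) + 1) * (Cu * (4 / 3 : ℝ) ^ n) ^ 2 := by linarith
          refine hle.trans ?_
          simp only [hBdef]
          have hn1 : (1 : ℝ) ≤ (n : ℝ) + 1 := by linarith [(Nat.cast_nonneg n : (0:ℝ) ≤ (n:ℝ))]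
          have hX2 : (1 : ℝ) ≤ ((4 / 3 : ℝ) ^ n) ^ 2 := by nlinarith [hXn']
          have e1 : ((n : ℝ) + 1) * (Cu * (4 / 3 : ℝ) ^ n) ^ 2
              = (((n : ℝ) + 1) * ((4 / 3 : ℝ) ^ n) ^ 2) * Cu ^ 2 := by ring
          have e2 : (((n : ℝ) + 1) * (Cu + Cv + 1) * ((4 / 3 : ℝ) ^ n) ^ 2) ^ 2
              = ((((n : ℝ) + 1) * ((4 / 3 : ℝ) ^ n) ^ 2)
                  * (((n : ℝ) + 1) * ((4 / 3 : ℝ) ^ n) ^ 2)) * (Cu + Cv + 1) ^ 2 := by ring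
          rw [e1, e2]
          have hpq : (1 : ℝ) ≤ ((n : ℝ) + 1) * ((4 / 3 : ℝ) ^ n) ^ 2 := by nlinarith [hn1, hX2]
          have hc1 : Cu ^ 2 ≤ (Cu + Cv + 1) ^ 2 :=
            pow_le_pow_left₀ hCu0 (by linarith) 2
          have hc2 : ((n : ℝ) + 1) * ((4 / 3 : ℝ) ^ n) ^ 2
              ≤ (((n : ℝ) + 1) * ((4 / 3 : ℝ) ^ n) ^ 2) * (((n : ℝ) + 1) * ((4 / 3 : ℝ) ^ n) ^ 2) :=
            le_mul_of_one_le_left (by linarith) hpq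
          exact mul_le_mul hc2 hc1 (sq_nonneg _) (by nlinarith [hpq])
        have h5 := Real.sqrt_le_sqrt h4
        rwa [Real.sqrt_sq (norm_nonneg _), Real.sqrt_sq (hB0 n)] at h5
      have hv_bound : ∀ n, ‖v k n‖ ≤ B n := by
        intro n
        refine (hv_bound' n).trans ?_
        simp only [hBdef]
        have hXn' := hXn n
        have hXpos : (0 : ℝ) ≤ (4 / 3 : ℝ) ^ n := by positivity
        have hn0 : (0 : ℝ) ≤ (n : ℝ) := Nat.cast_nonneg n
        nlinarith [mul_nonneg (mul_nonneg hn0 (by linarith : (0:ℝ) ≤ Cu + Cv + 1))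
            (sq_nonneg ((4 / 3 : ℝ) ^ n)),
          mul_nonneg (by linarith : (0:ℝ) ≤ Cu + Cv + 1) (sq_nonneg ((4 / 3 : ℝ) ^ n)),
          mul_nonneg hCv0 hXpos, mul_nonneg (mul_nonneg hCv0 hXpos) hXpos,
          mul_le_mul_of_nonneg_left hXn' (mul_nonneg hCv0 hXpos)]
      have hBsum : Summable fun n => B n * (1 / 8 : ℝ) ^ n := by
        have hs : Summable fun n : ℕ => (n : ℝ) * (2 / 9 : ℝ) ^ n := by
          simpa using summable_pow_mul_geometric_of_norm_lt_one 1 (r := (2 / 9 : ℝ))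
            (by rw [Real.norm_eq_abs, abs_of_nonneg (by norm_num : (0:ℝ) ≤ 2/9)]; norm_num)
        have hs2 : Summable fun n : ℕ => (2 / 9 : ℝ) ^ n :=
          summable_geometric_of_lt_one (by norm_num) (by norm_num)
        have hs3 : Summable fun n : ℕ => ((n : ℝ) + 1) * (2 / 9 : ℝ) ^ n := by
          have := hs.add hs2
          apply this.congr
          intro n
          ring
        apply Summable.congr (hs3.mul_left (Cu + Cv + 1))
        intro n
        have hkey : ((4 / 3 : ℝ) ^ n) ^ 2 * (1 / 8 : ℝ) ^ n = (2 / 9 : ℝ) ^ n := by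
          rw [← pow_mul, mul_comm n 2, pow_mul, ← mul_pow]
          norm_num
        simp only [hBdef]
        linear_combination (-(((n : ℝ) + 1) * (Cu + Cv + 1))) * hkey
      have hconv : ∀ z : ℂ, 0 < ‖z‖ → ‖z‖ < (1 / 8 : ℝ) → z ∉ (Icc 1 k).image α →
          Tendsto (fun K => ∑' mm, A K mm * z ^ mm) atTop
            (nhds (∑' mm, v k mm * z ^ mm)) := by
        intro z hz0 hzr hzS
        have hz1 : ‖z‖ < 1 := lt_trans hzr (by norm_num)
        have hTK : ∀ K, (∑' mm, A K mm * z ^ mm)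
            = (∏ j ∈ Icc (k + 1) K, bl (α j) z)
              * (G z / (1 - (starRingEnd ℂ) (α k) * z)) :=
          fun K => (hAS K z hz1).tsum_eq
        have hTv : (∑' mm, v k mm * z ^ mm)
            = Fk k z / (1 - (starRingEnd ℂ) (α k) * z) := (hvs z hz1).tsum_eq
        simp only [hTK, hTv]
        have hdkz : (1 : ℂ) - (starRingEnd ℂ) (α k) * z ≠ 0 := denom_ne hαk hz1
        have hne : ∀ j ∈ Icc 1 k, z ≠ α j := by
          intro j hj hzj
          exact hzS (Finset.mem_image.mpr ⟨j, hj, hzj.symm⟩)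
        have hPne : (∏ j ∈ Icc 1 k, bl (α j) z) ≠ 0 := by
          apply Finset.prod_ne_zero_iff.mpr
          intro j hj
          have hj' := Finset.mem_Icc.mp hj
          exact div_ne_zero (sub_ne_zero.mpr (hne j hj))
            (denom_ne (hαall j hj'.1) hz1)
        have hkey : ∀ K, k ≤ K →
            Fk k z = (∏ j ∈ Icc (k + 1) K, bl (α j) z) * Fk K z := by
          intro K hkK
          have hsplit : (∏ j ∈ Icc 1 k, bl (α j) z) * (∏ j ∈ Icc (k + 1) K, bl (α j) z)
              = ∏ j ∈ Icc 1 K, bl (α j) z := by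
            have e1 : Icc 1 k = Ioc 0 k := Finset.Icc_add_one_left_eq_Ioc 0 k
            have e2 : Icc (k + 1) K = Ioc k K := Finset.Icc_add_one_left_eq_Ioc k K
            have e3 : Icc 1 K = Ioc 0 K := Finset.Icc_add_one_left_eq_Ioc 0 K
            rw [e1, e2, e3]
            exact Finset.prod_Ioc_consecutive _ (Nat.zero_le k) hkK
          have hfk : F z = (∏ j ∈ Icc 1 k, bl (α j) z) * Fk k z := hfac k hkm z hz1
          have hfK : F z = (∏ j ∈ Icc 1 K, bl (α j) z) * Fk K z :=
            hfac K (htop ▸ le_top) z hz1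
          apply mul_left_cancel₀ hPne
          rw [← mul_assoc, hsplit]
          exact hfk.symm.trans hfK
        have hQle : ∀ K, ‖∏ j ∈ Icc (k + 1) K, bl (α j) z‖ ≤ 1 := by
          intro K
          rw [norm_prod]
          apply Finset.prod_le_one (fun j _ => norm_nonneg _)
          intro j hj
          have hj' := Finset.mem_Icc.mp hj
          exact norm_bl_le_one (hαall j (by omega)) hz1
        have hzero : Tendsto (fun K => (∏ j ∈ Icc (k + 1) K, bl (α j) z)
            * (G z / (1 - (starRingEnd ℂ) (α k) * z))
            - Fk k z / (1 - (starRingEnd ℂ) (α k) * z)) atTop (nhds 0) := by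
          apply squeeze_zero_norm'
            (a := fun K => ‖G z - Fk K z‖ / ‖(1 : ℂ) - (starRingEnd ℂ) (α k) * z‖)
          · filter_upwards [eventually_ge_atTop k] with K hkK
            rw [hkey K hkK]
            have hring : (∏ j ∈ Icc (k + 1) K, bl (α j) z)
                * (G z / (1 - (starRingEnd ℂ) (α k) * z))
                - (∏ j ∈ Icc (k + 1) K, bl (α j) z) * Fk K z
                  / (1 - (starRingEnd ℂ) (α k) * z)
                = (∏ j ∈ Icc (k + 1) K, bl (α j) z)
                  * ((G z - Fk K z) / (1 - (starRingEnd ℂ) (α k) * z)) := by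
              rw [← mul_div_assoc, ← mul_div_assoc, div_sub_div_same, ← mul_sub]
            rw [hring, norm_mul, norm_div]
            calc ‖∏ j ∈ Icc (k + 1) K, bl (α j) z‖
                * (‖G z - Fk K z‖ / ‖(1 : ℂ) - (starRingEnd ℂ) (α k) * z‖)
                ≤ 1 * (‖G z - Fk K z‖ / ‖(1 : ℂ) - (starRingEnd ℂ) (α k) * z‖) :=
                  mul_le_mul_of_nonneg_right (hQle K) (by positivity)
              _ = ‖G z - Fk K z‖ / ‖(1 : ℂ) - (starRingEnd ℂ) (α k) * z‖ := one_mul _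
          · have hg := hGinf htop z hz1
            have hzero2 : Tendsto (fun K => G z - Fk K z) atTop (nhds 0) := by
              have h6 := (tendsto_const_nhds (x := G z) (f := atTop (α := ℕ))).sub hg
              simpa using h6
            have hn := hzero2.norm
            simp only [norm_zero] at hn
            simpa using hn.div_const ‖(1 : ℂ) - (starRingEnd ℂ) (α k) * z‖
        have h7 := hzero.add_const (Fk k z / (1 - (starRingEnd ℂ) (α k) * z))
        simpa using h7
      have hlim := limcoeff (by norm_num : (0 : ℝ) < 1 / 8) ((Icc 1 k).image α) hBsum
        hA_bound hv_bound hconv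
      have hpsum : ∀ N, ∑ i ∈ range N, ‖v k i‖ ^ 2 ≤ ∑ i ∈ range N, ‖u k i‖ ^ 2 := by
        intro N
        have htendsto : Tendsto (fun K => ∑ i ∈ range N, ‖A K i‖ ^ 2) atTop
            (nhds (∑ i ∈ range N, ‖v k i‖ ^ 2)) :=
          tendsto_finset_sum _ (fun i _ => ((hlim i).norm.pow 2))
        exact le_of_tendsto htendsto (Eventually.of_forall fun K => hAP K N)
      exact ynorm_mono γ hmono hconc (v k) (u k) hpsum
end

section
/- Let (γ_n) be monotone increasing with γ_0=0 and suppose Γ_n = γ_{n+1}−γ_n is bounded and monotone decreasing. If F ∈ H^2 has a root at α ∈ D with F(z) = (z−α)H_α(z), and φ_α(F)(z) = (1−ᾱz)H_α(z), then ‖φ_α(F)‖_{Y_γ}^2 ≥ ‖F‖_{Y_γ}^2. -/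
/-- If the differences `Γ_n = γ_{n+1}-γ_n` are bounded and monotone decreasing, then
reflecting a root `α ∈ 𝔻` of `F ∈ H²` increases the `Y_γ` semi-norm:
`‖φ_α(F)‖_{Y_γ}² ≥ ‖F‖_{Y_γ}²`. -/
theorem stmt16 (γ : ℕ → ℝ) (hmono : Monotone γ) (h0 : γ 0 = 0)
    (hbdd : ∃ C : ℝ, ∀ n, γ (n + 1) - γ n ≤ C)
    (hconc : ∀ n, γ (n + 2) - γ (n + 1) ≤ γ (n + 1) - γ n)
    (α : ℂ) (hα : ‖α‖ < 1) (a c d : ℕ → ℂ)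
    -- `c` : coefficients of `F(z) = (z-α)H_α(z)`, where `H_α` has coefficients `a`
    (hc0 : c 0 = -α * a 0) (hc : ∀ n, c (n + 1) = a n - α * a (n + 1))
    -- `d` : coefficients of `φ_α(F)(z) = (1-ᾱz)H_α(z)`
    (hd0 : d 0 = a 0) (hd : ∀ n, d (n + 1) = a (n + 1) - (starRingEnd ℂ) α * a n)
    -- `F ∈ H²` (hence `H_α ∈ H²`)
    (hF2 : Summable fun n => ‖c n‖ ^ 2)
    (ha2 : Summable fun n => ‖a n‖ ^ 2) :
    ynorm2e γ c ≤ ynorm2e γ d := by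
  have hΓ0 : ∀ n, 0 ≤ γ (n + 1) - γ n := fun n => sub_nonneg.2 (hmono (Nat.le_succ n))
  have hsq : ∀ z : ℂ, ‖z‖ ^ 2 = z.re ^ 2 + z.im ^ 2 := by
    intro z
    rw [Complex.sq_norm, Complex.normSq_apply]; ring
  -- key pointwise identity
  have key : ∀ n, ‖d (n + 1)‖ ^ 2 - ‖c (n + 1)‖ ^ 2
      = (1 - ‖α‖ ^ 2) * (‖a (n + 1)‖ ^ 2 - ‖a n‖ ^ 2) := by
    intro n
    rw [hd n, hc n, hsq, hsq, hsq, hsq, hsq]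
    simp only [Complex.sub_re, Complex.sub_im, Complex.mul_re, Complex.mul_im,
      Complex.conj_re, Complex.conj_im]
    ring
  -- Abel summation identity for partial sums
  have E : ∀ N, ∑ n ∈ Finset.range (N + 1), (γ (n + 1) - γ n) * (‖d n‖ ^ 2 - ‖c n‖ ^ 2)
      = (1 - ‖α‖ ^ 2) * ((γ (N + 1) - γ N) * ‖a N‖ ^ 2
        + ∑ n ∈ Finset.range N, ((γ (n + 1) - γ n) - (γ (n + 2) - γ (n + 1))) * ‖a n‖ ^ 2) := by
    intro N
    induction N with
    | zero => simp [hd0, hc0, norm_mul, mul_pow]; ring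
    | succ N ih =>
      rw [Finset.sum_range_succ, ih, key N, Finset.sum_range_succ]
      ring
  -- partial sum inequality
  have hineq : ∀ N, ∑ n ∈ Finset.range N, (γ (n + 1) - γ n) * ‖c n‖ ^ 2
      ≤ ∑ n ∈ Finset.range N, (γ (n + 1) - γ n) * ‖d n‖ ^ 2 := by
    intro N
    cases N with
    | zero => simp
    | succ N =>
      have h := E N
      have hpos : 0 ≤ (1 - ‖α‖ ^ 2) * ((γ (N + 1) - γ N) * ‖a N‖ ^ 2
          + ∑ n ∈ Finset.range N, ((γ (n + 1) - γ n) - (γ (n + 2) - γ (n + 1))) * ‖a n‖ ^ 2) := by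
        apply mul_nonneg
        · nlinarith [norm_nonneg α]
        · apply add_nonneg (mul_nonneg (hΓ0 N) (sq_nonneg _))
          exact Finset.sum_nonneg fun n _ =>
            mul_nonneg (sub_nonneg.2 (hconc n)) (sq_nonneg _)
      have hsplit : ∑ n ∈ Finset.range (N + 1), (γ (n + 1) - γ n) * (‖d n‖ ^ 2 - ‖c n‖ ^ 2)
          = ∑ n ∈ Finset.range (N + 1), (γ (n + 1) - γ n) * ‖d n‖ ^ 2
            - ∑ n ∈ Finset.range (N + 1), (γ (n + 1) - γ n) * ‖c n‖ ^ 2 := by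
        rw [← Finset.sum_sub_distrib]
        exact Finset.sum_congr rfl fun n _ => by ring
      linarith [h, hsplit, hpos]
  -- summability
  obtain ⟨C, hC⟩ := hbdd
  have hg : Summable fun n => 2 * ‖a (n + 1)‖ ^ 2 + 2 * ‖a n‖ ^ 2 :=
    (((summable_nat_add_iff 1).2 ha2).mul_left 2).add (ha2.mul_left 2)
  have hd2' : Summable fun n => ‖d (n + 1)‖ ^ 2 := by
    refine Summable.of_nonneg_of_le (fun n => sq_nonneg _) (fun n => ?_) hg
    · have h1 : ‖d (n + 1)‖ ≤ ‖a (n + 1)‖ + ‖α‖ * ‖a n‖ := by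
        rw [hd n]
        calc ‖a (n + 1) - (starRingEnd ℂ) α * a n‖
            ≤ ‖a (n + 1)‖ + ‖(starRingEnd ℂ) α * a n‖ := norm_sub_le _ _
          _ = ‖a (n + 1)‖ + ‖α‖ * ‖a n‖ := by rw [norm_mul, RCLike.norm_conj]
      have h2 : ‖d (n + 1)‖ ^ 2 ≤ (‖a (n + 1)‖ + ‖α‖ * ‖a n‖) ^ 2 :=
        pow_le_pow_left₀ (norm_nonneg _) h1 2
      have ht : ‖α‖ ^ 2 ≤ 1 := by nlinarith [norm_nonneg α, hα.le]
      have ht2 : ‖α‖ ^ 2 * ‖a n‖ ^ 2 ≤ 1 * ‖a n‖ ^ 2 :=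
        mul_le_mul_of_nonneg_right ht (sq_nonneg _)
      nlinarith [h2, sq_nonneg (‖a (n + 1)‖ - ‖α‖ * ‖a n‖), ht2]
  have hd2 : Summable fun n => ‖d n‖ ^ 2 := (summable_nat_add_iff 1).1 hd2'
  have hsumc : Summable fun n => (γ (n + 1) - γ n) * ‖c n‖ ^ 2 :=
    Summable.of_nonneg_of_le (fun n => mul_nonneg (hΓ0 n) (sq_nonneg _))
      (fun n => mul_le_mul_of_nonneg_right (hC n) (sq_nonneg _)) (hF2.mul_left C)
  have hsumd : Summable fun n => (γ (n + 1) - γ n) * ‖d n‖ ^ 2 :=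
    Summable.of_nonneg_of_le (fun n => mul_nonneg (hΓ0 n) (sq_nonneg _))
      (fun n => mul_le_mul_of_nonneg_right (hC n) (sq_nonneg _)) (hd2.mul_left C)
  -- conclude
  unfold ynorm2e
  rw [← ENNReal.ofReal_tsum_of_nonneg (fun n => mul_nonneg (hΓ0 n) (sq_nonneg _)) hsumc,
      ← ENNReal.ofReal_tsum_of_nonneg (fun n => mul_nonneg (hΓ0 n) (sq_nonneg _)) hsumd]
  apply ENNReal.ofReal_le_ofReal
  apply Summable.tsum_le_of_sum_range_le hsumc
  intro N
  exact (hineq N).trans (Summable.sum_le_tsum _ (fun n _ => mul_nonneg (hΓ0 n) (sq_nonneg _)) hsumd)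
end

section
/- Let (γ_n) be monotone increasing with γ_0=0 and Γ_n = γ_{n+1}−γ_n monotone increasing. If F ∈ Y_γ (i.e. ‖F‖_{Y_γ} < ∞) has a root at α ∈ D with F(z)=(z−α)H_α(z) and φ_α(F)(z) = (1−ᾱz)H_α(z), then ‖φ_α(F)‖_{Y_γ}^2 ≤ ‖F‖_{Y_γ}^2. -/
set_option maxHeartbeats 1000000

open Finset Filter Topology

private lemma key17 (α x y : ℂ) : ‖x - α*y‖^2 - ‖y - (starRingEnd ℂ) α * x‖^2
    = (1 - ‖α‖^2) * (‖x‖^2 - ‖y‖^2) := by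
  simp only [Complex.sq_norm, Complex.normSq_apply, Complex.sub_re,
    Complex.sub_im, Complex.mul_re, Complex.mul_im, Complex.conj_re, Complex.conj_im]
  ring

private lemma geom17 {r : ℝ} (h0 : 0 ≤ r) (h1 : r < 1) (m : ℕ) :
    ∑ i ∈ range m, r ^ i ≤ (1 - r)⁻¹ := by
  rw [geom_sum_eq (ne_of_lt h1), div_le_iff_of_neg (by linarith : r - 1 < 0)]
  have h2 : (0:ℝ) < 1 - r := by linarith
  have h3 : (1-r)⁻¹ * (r-1) = -1 := by field_simp; ring
  rw [h3]
  nlinarith [pow_nonneg h0 m]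

/-- `Y_γ` semi-norm squared. -/
noncomputable def ynorm2 (γ : ℕ → ℝ) (a : ℕ → ℂ) : ℝ :=
  ∑' n, (γ (n + 1) - γ n) * ‖a n‖ ^ 2

/-- If the differences `Γ_n = γ_{n+1}-γ_n` are monotone increasing, then reflecting a
root `α ∈ 𝔻` of `F ∈ Y_γ` decreases the `Y_γ` semi-norm:
`‖φ_α(F)‖_{Y_γ}² ≤ ‖F‖_{Y_γ}²`. -/
theorem stmt17 (γ : ℕ → ℝ) (hmono : Monotone γ) (h0 : γ 0 = 0)
    (hconv : ∀ n, γ (n + 1) - γ n ≤ γ (n + 2) - γ (n + 1))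
    (α : ℂ) (hα : ‖α‖ < 1) (a c d : ℕ → ℂ)
    -- `c` : coefficients of `F(z) = (z-α)H_α(z)`, where `H_α` has coefficients `a`
    (hc0 : c 0 = -α * a 0) (hc : ∀ n, c (n + 1) = a n - α * a (n + 1))
    -- `d` : coefficients of `φ_α(F)(z) = (1-ᾱz)H_α(z)`
    (hd0 : d 0 = a 0) (hd : ∀ n, d (n + 1) = a (n + 1) - (starRingEnd ℂ) α * a n)
    -- `F ∈ H²` (hence `H_α ∈ H²`)
    (hF2 : Summable fun n => ‖c n‖ ^ 2)
    (ha2 : Summable fun n => ‖a n‖ ^ 2)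
    -- `F ∈ Y_γ`
    (hY : Summable fun n => (γ (n + 1) - γ n) * ‖c n‖ ^ 2) :
    (Summable fun n => (γ (n + 1) - γ n) * ‖d n‖ ^ 2) ∧
      ynorm2 γ d ≤ ynorm2 γ c := by
  simp only [ynorm2]
  set Γ : ℕ → ℝ := fun n => γ (n + 1) - γ n with hΓdef
  have hΓ : ∀ n, Γ n = γ (n+1) - γ n := fun n => rfl
  have hΓ0 : ∀ n, 0 ≤ Γ n := fun n => sub_nonneg.2 (hmono (Nat.le_succ n))
  have hΓmono : Monotone Γ := monotone_nat_of_le_succ (fun n => hconv n)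
  have hα0 : (0:ℝ) ≤ ‖α‖ := norm_nonneg α
  have hα2 : ‖α‖^2 ≤ 1 := by nlinarith
  have hvsum : Summable (fun n => Γ n * ‖c n‖ ^ 2) := hY
  have hv0 : ∀ n, 0 ≤ Γ n * ‖c n‖ ^ 2 := fun n => mul_nonneg (hΓ0 n) (sq_nonneg _)
  have hu0 : ∀ n, 0 ≤ Γ n * ‖d n‖ ^ 2 := fun n => mul_nonneg (hΓ0 n) (sq_nonneg _)
  -- tail sums T n of the Γ-weighted series of c
  set V : ℝ := ∑' n, Γ n * ‖c n‖ ^ 2 with hVdef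
  have hV0 : 0 ≤ V := tsum_nonneg hv0
  set T : ℕ → ℝ := fun n => ∑' m, Γ (m + (n+1)) * ‖c (m + (n+1))‖ ^ 2 with hTdef
  have hTsum : ∀ n, Summable fun m => Γ (m + (n + 1)) * ‖c (m + (n + 1))‖ ^ 2 :=
    fun n => (summable_nat_add_iff (n+1)).2 hvsum
  have hT0 : ∀ n, 0 ≤ T n := fun n => tsum_nonneg (fun m => hv0 _)
  have hTtend : Tendsto T atTop (𝓝 0) :=
    (tendsto_sum_nat_add (fun n => Γ n * ‖c n‖ ^ 2)).comp (tendsto_add_atTop_nat 1)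
  have hTleV : ∀ n, T n ≤ V := by
    intro n
    have := (Summable.sum_add_tsum_nat_add (n+1) hvsum : _)
    have hs : 0 ≤ ∑ i ∈ range (n+1), Γ i * ‖c i‖ ^ 2 := Finset.sum_nonneg (fun i _ => hv0 i)
    linarith
  -- representation of a n via tails of c
  have hrep : ∀ n m, a n = α^m * a (n+m) + ∑ k ∈ range m, α^k * c (n+1+k) := by
    intro n m
    induction m with
    | zero => simp
    | succ m ih =>
      have ha' : a (n+m) = c (n+m+1) + α * a (n+m+1) := by rw [hc (n+m)]; ring
      have e1 : n + (m+1) = n+m+1 := by omega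
      have e2 : n + 1 + m = n+m+1 := by omega
      rw [sum_range_succ, ih, ha', e1, e2]
      ring
  -- uniform bound of ‖a‖
  have haC : ∀ k, ‖a k‖ ≤ Real.sqrt (∑' n, ‖a n‖^2) := by
    intro k
    have h1 : ‖a k‖^2 ≤ ∑' n, ‖a n‖^2 := Summable.le_tsum ha2 k (fun _ _ => sq_nonneg _)
    calc ‖a k‖ = Real.sqrt (‖a k‖^2) := (Real.sqrt_sq (norm_nonneg _)).symm
      _ ≤ _ := Real.sqrt_le_sqrt h1
  set C : ℝ := Real.sqrt (∑' n, ‖a n‖^2) with hCdef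
  -- key decay bound : Γ n * ‖a n‖^2 ≤ T n / (1-‖α‖)^2
  have hbound : ∀ n, Γ n * ‖a n‖^2 ≤ ((1-‖α‖)⁻¹)^2 * T n := by
    intro n
    have step : ∀ m, Real.sqrt (Γ n) * ‖a n‖ ≤
        ‖α‖^m * (Real.sqrt (Γ n) * C) + (1-‖α‖)⁻¹ * Real.sqrt (T n) := by
      intro m
      have h1 : ‖a n‖ ≤ ‖α‖^m * ‖a (n+m)‖ + ∑ k ∈ range m, ‖α‖^k * ‖c (n+1+k)‖ := by
        calc ‖a n‖ = ‖α^m * a (n+m) + ∑ k ∈ range m, α^k * c (n+1+k)‖ := by rw [← hrep n m]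
          _ ≤ ‖α^m * a (n+m)‖ + ‖∑ k ∈ range m, α^k * c (n+1+k)‖ := norm_add_le _ _
          _ ≤ ‖α‖^m * ‖a (n+m)‖ + ∑ k ∈ range m, ‖α‖^k * ‖c (n+1+k)‖ := by
              gcongr
              · rw [norm_mul, norm_pow]
              · exact (norm_sum_le _ _).trans (by
                  apply Finset.sum_le_sum
                  intro k _
                  rw [norm_mul, norm_pow])
      have hsq : ∀ k, Real.sqrt (Γ n) * ‖c (n+1+k)‖ ≤ Real.sqrt (T n) := by
        intro k
        have e : n + 1 + k = k + (n+1) := by omega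
        have h2 : Γ n * ‖c (n+1+k)‖^2 ≤ T n := by
          calc Γ n * ‖c (n+1+k)‖^2 ≤ Γ (n+1+k) * ‖c (n+1+k)‖^2 := by
                have := hΓmono (by omega : n ≤ n+1+k)
                nlinarith [sq_nonneg ‖c (n+1+k)‖]
            _ ≤ T n := by
                rw [e]
                exact Summable.le_tsum (hTsum n) k (fun _ _ => hv0 _)
        calc Real.sqrt (Γ n) * ‖c (n+1+k)‖
            = Real.sqrt (Γ n * ‖c (n+1+k)‖^2) := by
              rw [Real.sqrt_mul (hΓ0 n), Real.sqrt_sq (norm_nonneg _)]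
          _ ≤ Real.sqrt (T n) := Real.sqrt_le_sqrt h2
      have h3 : Real.sqrt (Γ n) * ‖a n‖ ≤
          ‖α‖^m * (Real.sqrt (Γ n) * ‖a (n+m)‖)
            + ∑ k ∈ range m, ‖α‖^k * (Real.sqrt (Γ n) * ‖c (n+1+k)‖) := by
        have := mul_le_mul_of_nonneg_left h1 (Real.sqrt_nonneg (Γ n))
        calc Real.sqrt (Γ n) * ‖a n‖ ≤ Real.sqrt (Γ n) *
              (‖α‖^m * ‖a (n+m)‖ + ∑ k ∈ range m, ‖α‖^k * ‖c (n+1+k)‖) := this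
          _ = _ := by
              rw [mul_add, Finset.mul_sum]
              congr 1
              · ring
              · exact Finset.sum_congr rfl (fun k _ => by ring)
      calc Real.sqrt (Γ n) * ‖a n‖
          ≤ ‖α‖^m * (Real.sqrt (Γ n) * ‖a (n+m)‖)
            + ∑ k ∈ range m, ‖α‖^k * (Real.sqrt (Γ n) * ‖c (n+1+k)‖) := h3
        _ ≤ ‖α‖^m * (Real.sqrt (Γ n) * C)
            + ∑ k ∈ range m, ‖α‖^k * Real.sqrt (T n) := by
            apply add_le_add
            · exact mul_le_mul_of_nonneg_left
                (mul_le_mul_of_nonneg_left (haC _) (Real.sqrt_nonneg _)) (pow_nonneg hα0 m)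
            · exact Finset.sum_le_sum (fun k _ =>
                mul_le_mul_of_nonneg_left (hsq k) (pow_nonneg hα0 k))
        _ = ‖α‖^m * (Real.sqrt (Γ n) * C)
            + (∑ k ∈ range m, ‖α‖^k) * Real.sqrt (T n) := by rw [Finset.sum_mul]
        _ ≤ ‖α‖^m * (Real.sqrt (Γ n) * C) + (1-‖α‖)⁻¹ * Real.sqrt (T n) :=
            add_le_add (le_refl _) (mul_le_mul_of_nonneg_right (geom17 hα0 hα m)
              (Real.sqrt_nonneg _))
    have hlim : Real.sqrt (Γ n) * ‖a n‖ ≤ (1-‖α‖)⁻¹ * Real.sqrt (T n) := by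
      have htend : Tendsto (fun m => ‖α‖^m * (Real.sqrt (Γ n) * C)
          + (1-‖α‖)⁻¹ * Real.sqrt (T n)) atTop (𝓝 ((1-‖α‖)⁻¹ * Real.sqrt (T n))) := by
        have h4 : Tendsto (fun m : ℕ => ‖α‖^m) atTop (𝓝 0) :=
          tendsto_pow_atTop_nhds_zero_of_lt_one hα0 hα
        have := (h4.mul_const (Real.sqrt (Γ n) * C)).add
          (tendsto_const_nhds (x := (1-‖α‖)⁻¹ * Real.sqrt (T n)))
        simpa using this
      exact ge_of_tendsto' htend step
    have h5 : (Real.sqrt (Γ n) * ‖a n‖)^2 ≤ ((1-‖α‖)⁻¹ * Real.sqrt (T n))^2 := by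
      apply pow_le_pow_left₀ (mul_nonneg (Real.sqrt_nonneg _) (norm_nonneg _)) hlim
    calc Γ n * ‖a n‖^2 = (Real.sqrt (Γ n) * ‖a n‖)^2 := by
          rw [mul_pow, Real.sq_sqrt (hΓ0 n)]
      _ ≤ ((1-‖α‖)⁻¹ * Real.sqrt (T n))^2 := h5
      _ = ((1-‖α‖)⁻¹)^2 * T n := by rw [mul_pow, Real.sq_sqrt (hT0 n)]
  -- the partial-sum identity
  have hiden : ∀ N, ∑ n ∈ range (N+1), Γ n * ‖d n‖^2
      + (1-‖α‖^2) * ∑ n ∈ range N, (Γ (n+1) - Γ n) * ‖a n‖^2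
      = ∑ n ∈ range (N+1), Γ n * ‖c n‖^2 + (1-‖α‖^2) * (Γ N * ‖a N‖^2) := by
    intro N
    induction N with
    | zero =>
      simp only [zero_add, range_one, sum_singleton, range_zero, sum_empty, mul_zero,
        add_zero, hd0, hc0, norm_mul, norm_neg, mul_pow]
      ring
    | succ N ih =>
      rw [sum_range_succ (fun n => Γ n * ‖d n‖^2), sum_range_succ (fun n => Γ n * ‖c n‖^2),
        sum_range_succ (fun n => (Γ (n+1) - Γ n) * ‖a n‖^2)]
      have hk := key17 α (a N) (a (N+1))
      rw [← hc N, ← hd N] at hk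
      linear_combination ih - Γ (N+1) * hk
  -- summability of the d-series
  have husum : Summable (fun n => Γ n * ‖d n‖^2) := by
    apply summable_of_sum_range_le hu0 (c := V + (1-‖α‖^2) * (((1-‖α‖)⁻¹)^2 * V))
    intro N
    beta_reduce
    match N with
    | 0 =>
      simp only [range_zero, sum_empty]
      have h7 : 0 ≤ (1-‖α‖^2) * (((1-‖α‖)⁻¹)^2 * V) :=
        mul_nonneg (by nlinarith) (mul_nonneg (sq_nonneg _) hV0)
      linarith
    | (M+1) =>
      have hw : 0 ≤ (1-‖α‖^2) * ∑ n ∈ range M, (Γ (n+1) - Γ n) * ‖a n‖^2 := by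
        apply mul_nonneg (by nlinarith)
        exact Finset.sum_nonneg (fun n _ => mul_nonneg (sub_nonneg.2 (hconv n)) (sq_nonneg _))
      have hvle : ∑ n ∈ range (M+1), Γ n * ‖c n‖^2 ≤ V := Summable.sum_le_tsum _ (fun n _ => hv0 n) hvsum
      have hrle : (1-‖α‖^2) * (Γ M * ‖a M‖^2) ≤ (1-‖α‖^2) * (((1-‖α‖)⁻¹)^2 * V) := by
        apply mul_le_mul_of_nonneg_left _ (by nlinarith)
        exact (hbound M).trans (by
          apply mul_le_mul_of_nonneg_left (hTleV M) (by positivity))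
      have h8 : ∑ i ∈ range (M+1), Γ i * ‖d i‖^2
          ≤ ∑ n ∈ range (M+1), Γ n * ‖c n‖^2 + (1-‖α‖^2) * (Γ M * ‖a M‖^2) := by
        have h9 := hiden M
        linarith
      exact h8.trans (add_le_add hvle hrle)
  refine ⟨husum, ?_⟩
  -- the limit argument
  have hAtend : Tendsto (fun N => ∑ n ∈ range (N+1), Γ n * ‖d n‖^2) atTop
      (𝓝 (∑' n, Γ n * ‖d n‖^2)) :=
    husum.hasSum.tendsto_sum_nat.comp (tendsto_add_atTop_nat 1)
  have hrtend : Tendsto (fun N => (1-‖α‖^2) * (Γ N * ‖a N‖^2)) atTop (𝓝 0) := by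
    apply squeeze_zero (fun N => mul_nonneg (by nlinarith) (mul_nonneg (hΓ0 N) (sq_nonneg _)))
      (g := fun N => (1-‖α‖^2) * (((1-‖α‖)⁻¹)^2 * T N))
    · intro N
      exact mul_le_mul_of_nonneg_left (hbound N) (by nlinarith)
    · have := (tendsto_const_nhds (x := (1-‖α‖^2) * ((1-‖α‖)⁻¹)^2)).mul hTtend
      simpa [mul_assoc] using this
  have hBtend : Tendsto (fun N => ∑ n ∈ range (N+1), Γ n * ‖c n‖^2
      + (1-‖α‖^2) * (Γ N * ‖a N‖^2)) atTop (𝓝 V) := by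
    have h6 : Tendsto (fun N => ∑ n ∈ range (N+1), Γ n * ‖c n‖^2) atTop (𝓝 V) :=
      hvsum.hasSum.tendsto_sum_nat.comp (tendsto_add_atTop_nat 1)
    simpa using h6.add hrtend
  exact le_of_tendsto_of_tendsto' hAtend hBtend (by
    intro N
    have hw : 0 ≤ (1-‖α‖^2) * ∑ n ∈ range N, (Γ (n+1) - Γ n) * ‖a n‖^2 := by
      apply mul_nonneg (by nlinarith)
      exact Finset.sum_nonneg (fun n _ => mul_nonneg (sub_nonneg.2 (hconv n)) (sq_nonneg _))
    have := hiden N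
    linarith)
end

section
/- If γ_n is the bounded sequence with γ_n = 0 for n < k and γ_n = 1 for n ≥ k (for a fixed k ≥ 1), then for any F ∈ H^2 with root α ∈ D, writing F(z)=(z−α)H(z) and φ_α(F)(z)=(1−ᾱz)H(z) with H(z)=Σ a_j z^j, we have ‖φ_α(F)‖_{X_γ}^2 = ‖F‖_{X_γ}^2 − (1−|α|^2)|a_{k−1}|^2. -/
set_option maxHeartbeats 1000000

lemma key (α x y : ℂ) :
    ‖y - (starRingEnd ℂ) α * x‖ ^ 2 =
      ‖x - α * y‖ ^ 2 + (1 - ‖α‖ ^ 2) * (‖y‖ ^ 2 - ‖x‖ ^ 2) := by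
  simp only [← Complex.normSq_eq_norm_sq, Complex.sq_norm,
    Complex.normSq_apply, Complex.sub_re, Complex.sub_im, Complex.mul_re, Complex.mul_im,
    Complex.conj_re, Complex.conj_im]
  ring



/-- Specialization of the reflection identity to the weight `γ_n = 0` for `n < k`,
`γ_n = 1` for `n ≥ k` (`k ≥ 1`): for `F ∈ H²` with root `α ∈ 𝔻`, `F(z)=(z-α)H(z)`,
`φ_α(F)(z)=(1-ᾱz)H(z)`, `H(z)=Σ a_j z^j`, one has
`‖φ_α(F)‖_{X_γ}² = ‖F‖_{X_γ}² − (1-|α|²)|a_{k-1}|²`, i.e. in terms of tail sums of the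
coefficients `c` of `F` and `d` of `φ_α(F)`. -/
theorem stmt19 (k : ℕ) (hk : 1 ≤ k)
    (α : ℂ) (hα : ‖α‖ < 1) (a c d : ℕ → ℂ)
    -- `c` : coefficients of `F(z) = (z-α)H(z)`, where `H` has coefficients `a`
    (hc0 : c 0 = -α * a 0) (hc : ∀ n, c (n + 1) = a n - α * a (n + 1))
    -- `d` : coefficients of `φ_α(F)(z) = (1-ᾱz)H(z)`
    (hd0 : d 0 = a 0) (hd : ∀ n, d (n + 1) = a (n + 1) - (starRingEnd ℂ) α * a n)
    -- `F ∈ H²` (hence `H ∈ H²`)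
    (hF2 : Summable fun n => ‖c n‖ ^ 2)
    (ha2 : Summable fun n => ‖a n‖ ^ 2) :
    (∑' n : ℕ, ‖d (n + k)‖ ^ 2) =
      (∑' n : ℕ, ‖c (n + k)‖ ^ 2) - (1 - ‖α‖ ^ 2) * ‖a (k - 1)‖ ^ 2 := by
  set g : ℕ → ℝ := fun n => ‖a (n + 1 + (k - 1))‖ ^ 2 - ‖a (n + (k - 1))‖ ^ 2 with hg
  have hidx : ∀ n : ℕ, n + k = n + (k - 1) + 1 := fun n => by omega
  have hpt : ∀ n : ℕ, ‖d (n + k)‖ ^ 2 = ‖c (n + k)‖ ^ 2 + (1 - ‖α‖ ^ 2) * g n := by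
    intro n
    rw [hidx n, hc, hd, key α (a (n + (k - 1))) (a (n + (k - 1) + 1))]
    have : n + 1 + (k - 1) = n + (k - 1) + 1 := by omega
    simp [hg, this]
  have hga : Summable g := by
    exact ((ha2.comp_injective (add_left_injective (k-1))).comp_injective
      (add_left_injective 1)).sub (ha2.comp_injective (add_left_injective (k-1)))
  have hcs : Summable fun n => ‖c (n + k)‖ ^ 2 :=
    hF2.comp_injective (add_left_injective k)
  -- telescoping sum of g
  have htend : Filter.Tendsto (fun n : ℕ => ‖a (n + (k - 1))‖ ^ 2) Filter.atTop (nhds 0) :=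
    ha2.tendsto_atTop_zero.comp (Filter.tendsto_add_atTop_nat (k - 1))
  have hsum_g : HasSum g (0 - ‖a (k - 1)‖ ^ 2) := by
    have hpart : ∀ N : ℕ, ∑ n ∈ Finset.range N, g n
        = ‖a (N + (k - 1))‖ ^ 2 - ‖a (0 + (k - 1))‖ ^ 2 :=
      fun N => Finset.sum_range_sub (fun n => ‖a (n + (k - 1))‖ ^ 2) N
    have h1 : Filter.Tendsto (fun N => ∑ n ∈ Finset.range N, g n) Filter.atTop
        (nhds (0 - ‖a (k - 1)‖ ^ 2)) := by
      simp only [hpart, zero_add]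
      exact htend.sub tendsto_const_nhds
    have h2 := hga.hasSum.tendsto_sum_nat
    exact (tendsto_nhds_unique h2 h1) ▸ hga.hasSum
  have : (∑' n : ℕ, ‖d (n + k)‖ ^ 2)
      = (∑' n : ℕ, ‖c (n + k)‖ ^ 2) + (1 - ‖α‖ ^ 2) * (0 - ‖a (k - 1)‖ ^ 2) := by
    calc (∑' n : ℕ, ‖d (n + k)‖ ^ 2)
        = ∑' n : ℕ, (‖c (n + k)‖ ^ 2 + (1 - ‖α‖ ^ 2) * g n) := by
          exact tsum_congr hpt
      _ = (∑' n : ℕ, ‖c (n + k)‖ ^ 2) + ∑' n : ℕ, (1 - ‖α‖ ^ 2) * g n :=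
          Summable.tsum_add hcs (hga.mul_left _)
      _ = (∑' n : ℕ, ‖c (n + k)‖ ^ 2) + (1 - ‖α‖ ^ 2) * (0 - ‖a (k - 1)‖ ^ 2) := by
          rw [tsum_mul_left, hsum_g.tsum_eq]
  rw [this]; ring
end
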